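/- Let J be a real 2×2 matrix with tr(J) < 0 and det(J) > 0, D = diag(1,d) with 0 < d < 1, B_λ = D⁻¹(J - λI), and define P(λ) = tr(B_λ)² - 4 det(B_λ). If for some λ* > 0 both tr(B_{λ*}) > 0 and P(λ*) ≥ 0 hold, then P(λ) ≥ 0 and tr(B_λ) > 0 for all λ with 0 ≤ λ ≤ λ*. -/

import Mathlib

open Matrix

/-- The diffusion matrix D = diag(1, d). -/
noncomputable def Dmat (d : ℝ) : Matrix (Fin 2) (Fin 2) ℝ := !![1, 0; 0, d]

/-- B_λ = D⁻¹ (J - λ I). -/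
noncomputable def Bmat (J : Matrix (Fin 2) (Fin 2) ℝ) (d lam : ℝ) :
    Matrix (Fin 2) (Fin 2) ℝ := (Dmat d)⁻¹ * (J - lam • 1)

/-- P(λ) = tr(B_λ)² - 4 det(B_λ). -/
noncomputable def Pdisc (J : Matrix (Fin 2) (Fin 2) ℝ) (d lam : ℝ) : ℝ :=
  (Bmat J d lam).trace ^ 2 - 4 * (Bmat J d lam).det

lemma Dinv (d : ℝ) (hd : d ≠ 0) : (Dmat d)⁻¹ = !![1, 0; 0, d⁻¹] := by
  apply inv_eq_right_inv
  simp [Dmat, Matrix.mul_fin_two, hd]; exact (Matrix.one_fin_two).symm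

lemma Btrace (J : Matrix (Fin 2) (Fin 2) ℝ) (d lam : ℝ) (hd : d ≠ 0) :
    (Bmat J d lam).trace = (J 0 0 - lam) + (J 1 1 - lam) / d := by
  rw [Bmat, Dinv d hd]
  have : J - lam • 1 = !![J 0 0 - lam, J 0 1; J 1 0, J 1 1 - lam] := by
    ext i j; fin_cases i <;> fin_cases j <;> simp [Matrix.one_apply]
  rw [this, Matrix.mul_fin_two, Matrix.trace_fin_two]
  simp; ring

lemma Bdet (J : Matrix (Fin 2) (Fin 2) ℝ) (d lam : ℝ) (hd : d ≠ 0) :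
    (Bmat J d lam).det = ((J 0 0 - lam) * (J 1 1 - lam) - J 0 1 * J 1 0) / d := by
  rw [Bmat, Dinv d hd]
  have : J - lam • 1 = !![J 0 0 - lam, J 0 1; J 1 0, J 1 1 - lam] := by
    ext i j; fin_cases i <;> fin_cases j <;> simp [Matrix.one_apply]
  rw [this, Matrix.mul_fin_two, Matrix.det_fin_two_of]
  field_simp; ring

lemma key (a b c e d lam lamS : ℝ) (hd : 0 < d) (hd1 : d < 1)
    (htr : a + e < 0) (hdet : 0 < a * e - b * c)
    (hT : 0 < d * (a - lamS) + (e - lamS))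
    (hQ : 0 ≤ (d * (a - lamS) + (e - lamS)) ^ 2 - 4 * d * ((a - lamS) * (e - lamS) - b * c))
    (h0 : 0 ≤ lam) (hle : lam ≤ lamS) :
    0 ≤ (d * (a - lam) + (e - lam)) ^ 2 - 4 * d * ((a - lam) * (e - lam) - b * c) ∧
      0 < d * (a - lam) + (e - lam) := by
  have hlamS : 0 ≤ lamS := le_trans h0 hle
  have ha : a < 0 := by nlinarith
  have he : 0 < e := by nlinarith
  have hvert : (1 - d) * lamS < e - d * a := by nlinarith
  constructor
  · nlinarith [mul_nonneg (mul_nonneg (by linarith : (0:ℝ) ≤ 1 - d) (by linarith : 0 ≤ lamS - lam))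
      (by nlinarith : 0 ≤ 2 * (e - d * a) - (1 - d) * (lam + lamS))]
  · nlinarith

theorem stmt4 (J : Matrix (Fin 2) (Fin 2) ℝ) (d lamStar : ℝ)
    (hd : 0 < d) (hd1 : d < 1)
    (htr : J.trace < 0) (hdet : 0 < J.det)
    (hlamStar : 0 < lamStar)
    (hB : 0 < (Bmat J d lamStar).trace) (hP : 0 ≤ Pdisc J d lamStar) :
    ∀ lam : ℝ, 0 ≤ lam → lam ≤ lamStar →
      0 ≤ Pdisc J d lam ∧ 0 < (Bmat J d lam).trace := by
  intro lam h0 hle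
  have hd0 : d ≠ 0 := ne_of_gt hd
  set a := J 0 0; set b := J 0 1; set c := J 1 0; set e := J 1 1
  have htrJ : a + e < 0 := by rwa [Matrix.trace_fin_two] at htr
  have hdetJ : 0 < a * e - b * c := by rwa [Matrix.det_fin_two] at hdet
  -- translate hypotheses to scaled polynomial forms
  have hBd : 0 < d * (a - lamStar) + (e - lamStar) := by
    rw [Btrace J d lamStar hd0] at hB
    have : d * (a - lamStar) + (e - lamStar) = d * ((a - lamStar) + (e - lamStar) / d) := by
      field_simp
    rw [this]; positivity
  have hPd : 0 ≤ (d * (a - lamStar) + (e - lamStar)) ^ 2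
      - 4 * d * ((a - lamStar) * (e - lamStar) - b * c) := by
    rw [Pdisc, Btrace J d lamStar hd0, Bdet J d lamStar hd0] at hP
    have h2 : (0:ℝ) < d ^ 2 := by positivity
    have : (d * (a - lamStar) + (e - lamStar)) ^ 2
        - 4 * d * ((a - lamStar) * (e - lamStar) - b * c)
        = d ^ 2 * (((a - lamStar) + (e - lamStar) / d) ^ 2
          - 4 * (((a - lamStar) * (e - lamStar) - b * c) / d)) := by
      field_simp
    rw [this]; positivity
  obtain ⟨hQ, hT⟩ := key a b c e d lam lamStar hd hd1 htrJ hdetJ hBd hPd h0 hle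
  constructor
  · rw [Pdisc, Btrace J d lam hd0, Bdet J d lam hd0]
    have h2 : (0:ℝ) < d ^ 2 := by positivity
    have heq : ((a - lam) + (e - lam) / d) ^ 2
        - 4 * (((a - lam) * (e - lam) - b * c) / d)
        = ((d * (a - lam) + (e - lam)) ^ 2
          - 4 * d * ((a - lam) * (e - lam) - b * c)) / d ^ 2 := by
      field_simp
    rw [heq]; positivity
  · rw [Btrace J d lam hd0]
    have : (a - lam) + (e - lam) / d = (d * (a - lam) + (e - lam)) / d := by
      field_simp
    rw [this]; positivity
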